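/- Let X and Y be real normed spaces, e : X → Y an injective continuous linear map, and l_1, …, l_k continuous linear functionals on X that are linearly independent. Define the completeness defect ε_L := sup { ‖e w‖_Y : w ∈ X, ‖w‖_X ≤ 1, l_j(w) = 0 for all j = 1,…,k }. Then there exists a constant C_L ≥ 0 such that for every u ∈ X one has ‖e u‖_Y ≤ ε_L · ‖u‖_X + C_L · max_{1≤j≤k} |l_j(u)|. -/

import Mathlib

open Function Submodule

lemma pi_surj_of_linearIndependent {X : Type*} [NormedAddCommGroup X] [NormedSpace ℝ X]
    {k : ℕ} (l : Fin k → X →L[ℝ] ℝ) (hl : LinearIndependent ℝ l) :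
    Function.Surjective (LinearMap.pi fun j => (l j : X →ₗ[ℝ] ℝ)) := by
  classical
  set φ : X →ₗ[ℝ] (Fin k → ℝ) := LinearMap.pi fun j => (l j : X →ₗ[ℝ] ℝ)
  rw [← LinearMap.range_eq_top]
  by_contra h
  obtain ⟨f, hf0, hf⟩ := (LinearMap.range φ).exists_dual_map_eq_bot_of_lt_top
    (lt_top_iff_ne_top.mpr h) inferInstance
  have hvanish : ∀ x : X, f (φ x) = 0 := by
    intro x
    have : f (φ x) ∈ (LinearMap.range φ).map f :=
      Submodule.mem_map_of_mem (LinearMap.mem_range_self φ x)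
    rw [hf] at this
    simpa using this
  set c : Fin k → ℝ := fun j => f (Pi.single j 1) with hc
  have hfd : ∀ v : Fin k → ℝ, f v = ∑ j, v j * c j := by
    intro v
    have hv : v = ∑ j, v j • (Pi.single j 1 : Fin k → ℝ) := by
      ext i; simp [Pi.single_apply]
    conv_lhs => rw [hv]
    simp [hc, Finset.mul_sum, smul_eq_mul]
  have hcomb : ∀ x : X, ∑ j, c j • (l j) x = 0 := by
    intro x
    have := hvanish x
    rw [hfd] at this
    simpa [φ, LinearMap.pi_apply, mul_comm] using this
  have hczero : ∀ j, c j = 0 := by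
    have := Fintype.linearIndependent_iff.mp hl c ?_
    · exact this
    · ext x
      simpa using hcomb x
  apply hf0
  apply LinearMap.ext
  intro v
  rw [hfd]
  simp [hczero]

/-- Let `X` and `Y` be real normed spaces, `e : X → Y` an injective continuous linear map,
and `l 1, …, l k` continuous linear functionals on `X` that are linearly independent.
Define the completeness defect
`εL := sup { ‖e w‖_Y : w ∈ X, ‖w‖_X ≤ 1, l j w = 0 for all j }`.
Then there exists `C ≥ 0` such that for all `u : X`,
`‖e u‖ ≤ εL * ‖u‖ + C * max_j |l j u|`. -/
theorem stmt_0 {X Y : Type*} [NormedAddCommGroup X] [NormedSpace ℝ X]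
    [NormedAddCommGroup Y] [NormedSpace ℝ Y]
    (e : X →L[ℝ] Y) (he : Function.Injective e)
    {k : ℕ} (hk : 0 < k) (l : Fin k → X →L[ℝ] ℝ)
    (hl : LinearIndependent ℝ l)
    (εL : ℝ)
    (hεL : εL = sSup {r : ℝ | ∃ w : X, ‖w‖ ≤ 1 ∧ (∀ j, l j w = 0) ∧ r = ‖e w‖}) :
    ∃ C : ℝ, 0 ≤ C ∧ ∀ u : X,
      ‖e u‖ ≤ εL * ‖u‖ + C * ⨆ j, |l j u| := by
  classical
  haveI : Nonempty (Fin k) := ⟨⟨0, hk⟩⟩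
  set S := {r : ℝ | ∃ w : X, ‖w‖ ≤ 1 ∧ (∀ j, l j w = 0) ∧ r = ‖e w‖} with hS
  have hS0 : (0 : ℝ) ∈ S := ⟨0, by simp⟩
  have hSbdd : BddAbove S := by
    refine ⟨‖e‖, ?_⟩
    rintro r ⟨w, hw1, -, rfl⟩
    calc ‖e w‖ ≤ ‖e‖ * ‖w‖ := e.le_opNorm w
      _ ≤ ‖e‖ * 1 := by
          exact mul_le_mul_of_nonneg_left hw1 (norm_nonneg _)
      _ = ‖e‖ := mul_one _
  have hε0 : 0 ≤ εL := hεL ▸ le_csSup hSbdd hS0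
  -- key homogeneous bound
  have hkey : ∀ w : X, (∀ j, l j w = 0) → ‖e w‖ ≤ εL * ‖w‖ := by
    intro w hw
    rcases eq_or_ne w 0 with rfl | hw0
    · simp
    · have hn : (0 : ℝ) < ‖w‖ := norm_pos_iff.mpr hw0
      have hmem : ‖e (‖w‖⁻¹ • w)‖ ∈ S := by
        refine ⟨‖w‖⁻¹ • w, ?_, fun j => by simp [hw j], rfl⟩
        rw [norm_smul, norm_inv, norm_norm, inv_mul_cancel₀ hn.ne']
      have hle : ‖e (‖w‖⁻¹ • w)‖ ≤ εL := hεL ▸ le_csSup hSbdd hmem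
      have : ‖e w‖ = ‖w‖ * ‖e (‖w‖⁻¹ • w)‖ := by
        rw [map_smul, norm_smul, norm_inv, norm_norm]
        field_simp
      rw [this]
      calc ‖w‖ * ‖e (‖w‖⁻¹ • w)‖ ≤ ‖w‖ * εL :=
            mul_le_mul_of_nonneg_left hle (norm_nonneg _)
        _ = εL * ‖w‖ := mul_comm _ _
  -- dual family
  obtain ⟨x, hx⟩ : ∃ x : Fin k → X, ∀ j i, l i (x j) = if i = j then (1:ℝ) else 0 := by
    choose g hg using pi_surj_of_linearIndependent l hl
    exact ⟨fun j => g (Pi.single j 1),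
      fun j i => by simpa [Pi.single_apply] using congrFun (hg (Pi.single j 1)) i⟩
  set C : ℝ := ∑ j, (εL * ‖x j‖ + ‖e (x j)‖) with hC
  have hCnn : 0 ≤ C :=
    Finset.sum_nonneg fun j _ =>
      add_nonneg (mul_nonneg hε0 (norm_nonneg _)) (norm_nonneg _)
  refine ⟨C, hCnn, fun u => ?_⟩
  set M := ⨆ j, |l j u| with hM
  have hbdd : BddAbove (Set.range fun j => |l j u|) := (Set.finite_range _).bddAbove
  have hMj : ∀ j, |l j u| ≤ M := fun j => le_ciSup hbdd j
  have hMnn : 0 ≤ M := le_trans (abs_nonneg _) (hMj ⟨0, hk⟩)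
  set w : X := u - ∑ j, l j u • x j with hw
  have hwl : ∀ i, l i w = 0 := by
    intro i
    simp only [hw, map_sub, map_sum, map_smul, smul_eq_mul, hx]
    rw [Finset.sum_eq_single i]
    · simp
    · intro b _ hb
      simp [hb.symm]
    · simp
  have hdecomp : e u = e w + ∑ j, l j u • e (x j) := by
    simp [hw, map_sub, map_sum, map_smul]
  have h1 : ‖e u‖ ≤ εL * ‖w‖ + ∑ j, |l j u| * ‖e (x j)‖ := by
    rw [hdecomp]
    refine le_trans (norm_add_le _ _) (add_le_add (hkey w hwl) ?_)
    refine le_trans (norm_sum_le _ _) (le_of_eq ?_)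
    refine Finset.sum_congr rfl fun j _ => ?_
    rw [norm_smul, Real.norm_eq_abs]
  have h2 : ‖w‖ ≤ ‖u‖ + ∑ j, |l j u| * ‖x j‖ := by
    rw [hw]
    refine le_trans (norm_sub_le _ _) (add_le_add_right ?_ _)
    refine le_trans (norm_sum_le _ _) (le_of_eq ?_)
    refine Finset.sum_congr rfl fun j _ => ?_
    rw [norm_smul, Real.norm_eq_abs]
  have h3 : ‖e u‖ ≤ εL * ‖u‖ + ∑ j, |l j u| * (εL * ‖x j‖ + ‖e (x j)‖) := by
    calc ‖e u‖ ≤ εL * ‖w‖ + ∑ j, |l j u| * ‖e (x j)‖ := h1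
      _ ≤ εL * (‖u‖ + ∑ j, |l j u| * ‖x j‖) + ∑ j, |l j u| * ‖e (x j)‖ :=
          add_le_add_left (mul_le_mul_of_nonneg_left h2 hε0) _
      _ = εL * ‖u‖ + ∑ j, |l j u| * (εL * ‖x j‖ + ‖e (x j)‖) := by
          rw [mul_add, Finset.mul_sum, add_assoc]
          congr 1
          rw [← Finset.sum_add_distrib]
          refine Finset.sum_congr rfl fun j _ => ?_
          ring
  refine h3.trans (add_le_add_right ?_ _)
  rw [hC, Finset.sum_mul]
  refine Finset.sum_le_sum fun j _ => ?_
  rw [mul_comm (εL * ‖x j‖ + ‖e (x j)‖) M]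
  exact mul_le_mul_of_nonneg_right (hMj j)
    (add_nonneg (mul_nonneg hε0 (norm_nonneg _)) (norm_nonneg _))
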